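/- arXiv:1503.07207 — 3 statements merged into one kernel-verified Lean document; each statement's English description precedes it below -/
import Mathlib

section
/- Let k ≥ 1 and let p, q be projections in M_k(ℂ), and set δ = tr_k(pq). Then there exists a projection q̃ ∈ M_k(ℂ) such that: (i) q̃p = 0; (ii) tr_k(q̃) = min(tr_k(q), 1 − tr_k(p)); (iii) ‖q − q̃‖₂ ≤ 6√δ. -/
open Matrix

/-- The normalized trace `tr_k` on `M_k(ℂ)` (real part; on the elements we consider, the
trace is real). -/
noncomputable def ntr {k : ℕ} (a : Matrix (Fin k) (Fin k) ℂ) : ℝ :=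
  a.trace.re / k

/-- The 2-norm `‖a‖₂ = tr_k(a* a)^{1/2}` on `M_k(ℂ)`. -/
noncomputable def l2norm {k : ℕ} (a : Matrix (Fin k) (Fin k) ℂ) : ℝ :=
  Real.sqrt (ntr (aᴴ * a))

/-- A projection: a self-adjoint idempotent matrix. -/
def IsProjection {k : ℕ} (p : Matrix (Fin k) (Fin k) ℂ) : Prop :=
  p.IsHermitian ∧ p * p = p

section Aux
open Module Submodule

variable {K V : Type*} [Field K] [AddCommGroup V] [Module K V] [FiniteDimensional K V]

lemma aux_step (F G : Submodule K V) (hFG : F ≤ G) (hlt : finrank K F < finrank K G) :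
    ∃ F' : Submodule K V, F ≤ F' ∧ F' ≤ G ∧ finrank K F' = finrank K F + 1 := by
  have hne : F ≠ G := fun e => by rw [e] at hlt; exact lt_irrefl _ hlt
  obtain ⟨x, hxG, hxF⟩ := SetLike.exists_of_lt (lt_of_le_of_ne hFG hne)
  have hx0 : x ≠ 0 := fun h => hxF (h ▸ F.zero_mem)
  refine ⟨F ⊔ K ∙ x, le_sup_left, sup_le hFG (by rwa [Submodule.span_singleton_le_iff_mem]), ?_⟩
  have hinf : F ⊓ (K ∙ x) = ⊥ := by
    rw [eq_bot_iff]
    rintro y hy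
    obtain ⟨hyF, hyx⟩ := Submodule.mem_inf.mp hy
    obtain ⟨c, rfl⟩ := Submodule.mem_span_singleton.mp hyx
    rcases eq_or_ne c 0 with rfl | hc
    · simp
    · exact absurd (by simpa [smul_smul, inv_mul_cancel₀ hc] using F.smul_mem c⁻¹ hyF) hxF
  have h := Submodule.finrank_sup_add_finrank_inf_eq F (K ∙ x)
  rw [hinf, finrank_bot, finrank_span_singleton hx0] at h
  omega

lemma aux_chain (d : ℕ) : ∀ F G : Submodule K V, F ≤ G → finrank K F + d ≤ finrank K G →
    ∃ W : Submodule K V, F ≤ W ∧ W ≤ G ∧ finrank K W = finrank K F + d := by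
  induction d with
  | zero => exact fun F G h _ => ⟨F, le_rfl, h, by omega⟩
  | succ d ih =>
    intro F G hFG hle
    obtain ⟨F', h1, h2, h3⟩ := aux_step F G hFG (by omega)
    obtain ⟨W, w1, w2, w3⟩ := ih F' G h2 (by omega)
    exact ⟨W, h1.trans w1, w2, by omega⟩

lemma exists_intermediate_finrank (F G : Submodule K V) (hFG : F ≤ G) (r : ℕ)
    (h1 : finrank K F ≤ r) (h2 : r ≤ finrank K G) :
    ∃ W : Submodule K V, F ≤ W ∧ W ≤ G ∧ finrank K W = r := by
  obtain ⟨W, w1, w2, w3⟩ := aux_chain (r - finrank K F) F G hFG (by omega)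
  exact ⟨W, w1, w2, by omega⟩

end Aux

section Aux2
open Module Submodule
lemma toEuclideanLin_mul {k : ℕ} (A B : Matrix (Fin k) (Fin k) ℂ) :
    Matrix.toEuclideanLin (A * B) =
      (Matrix.toEuclideanLin A) ∘ₗ (Matrix.toEuclideanLin B) := by
  rw [Matrix.toEuclideanLin_eq_toLin, Matrix.toLin_mul _ (PiLp.basisFun 2 ℂ (Fin k)) _]

lemma trace_toEuclideanLin {k : ℕ} (A : Matrix (Fin k) (Fin k) ℂ) :
    LinearMap.trace ℂ _ (Matrix.toEuclideanLin A) = A.trace := by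
  rw [Matrix.toEuclideanLin_eq_toLin,
    LinearMap.trace_eq_matrix_trace ℂ (PiLp.basisFun 2 ℂ (Fin k)), LinearMap.toMatrix_toLin]

lemma trace_conjTranspose_mul_self_re_nonneg {k : ℕ} (a : Matrix (Fin k) (Fin k) ℂ) :
    0 ≤ (aᴴ * a).trace.re := by
  simp only [Matrix.trace, Matrix.diag_apply, Matrix.mul_apply, Matrix.conjTranspose_apply]
  rw [Complex.re_sum]
  refine Finset.sum_nonneg fun j _ => ?_
  rw [Complex.re_sum]
  refine Finset.sum_nonneg fun i _ => ?_
  have : (starRingEnd ℂ) (a i j) * a i j = (Complex.normSq (a i j) : ℂ) := by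
    rw [mul_comm, Complex.mul_conj]
  simp [this, Complex.normSq_nonneg]

end Aux2

open Module Submodule in
set_option maxHeartbeats 1600000 in
/-- Lemma 3.4(vi)-(ix) of Dykema–Paulsen, matrix algebra case: given projections `p, q` in
`M_k(ℂ)` with `δ = tr_k(pq)`, there is a projection `q̃` with `q̃ ⊥ p`,
`tr_k(q̃) = min(tr_k(q), 1 - tr_k(p))`, and `‖q - q̃‖₂ ≤ 6√δ`. -/
theorem stmt_1 (k : ℕ) (hk : 1 ≤ k) (p q : Matrix (Fin k) (Fin k) ℂ)
    (hp : IsProjection p) (hq : IsProjection q) :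
    ∃ qt : Matrix (Fin k) (Fin k) ℂ,
      IsProjection qt ∧
      qt * p = 0 ∧
      ntr qt = min (ntr q) (1 - ntr p) ∧
      l2norm (q - qt) ≤ 6 * Real.sqrt (ntr (p * q)) := by
  classical
  obtain ⟨hpH, hpI⟩ := hp
  obtain ⟨hqH, hqI⟩ := hq
  have hk0 : (0:ℝ) < (k:ℝ) := by exact_mod_cast hk
  set E := EuclideanSpace ℂ (Fin k)
  set Lp := Matrix.toEuclideanLin p with hLpdef
  set Lq := Matrix.toEuclideanLin q with hLqdef
  set Pr : Submodule ℂ E := LinearMap.range Lp with hPrdef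
  set Qr : Submodule ℂ E := LinearMap.range Lq with hQrdef
  set Kk : Submodule ℂ E := LinearMap.ker Lp with hKkdef
  set F : Submodule ℂ E := LinearMap.range (Matrix.toEuclideanLin ((1 - p) * q)) with hFdef
  have hdimE : finrank ℂ E = k := by simp [E]
  set a := finrank ℂ Pr with hadef
  set b := finrank ℂ Qr with hbdef
  -- IsProj facts for p and q
  have hprojp : LinearMap.IsProj Pr Lp := by
    refine ⟨fun x => LinearMap.mem_range_self _ x, ?_⟩
    rintro x ⟨v, rfl⟩
    have := congrArg (fun f => f v) (toEuclideanLin_mul p p)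
    simp only [hpI] at this
    simpa [hLpdef] using this.symm
  have hprojq : LinearMap.IsProj Qr Lq := by
    refine ⟨fun x => LinearMap.mem_range_self _ x, ?_⟩
    rintro x ⟨v, rfl⟩
    have := congrArg (fun f => f v) (toEuclideanLin_mul q q)
    simp only [hqI] at this
    simpa [hLqdef] using this.symm
  have htrp : p.trace = (a : ℂ) := by
    rw [← trace_toEuclideanLin, ← hLpdef, hprojp.trace]
  have htrq : q.trace = (b : ℂ) := by
    rw [← trace_toEuclideanLin, ← hLqdef, hprojq.trace]
  -- rank-nullity
  have hrn : a + finrank ℂ Kk = k := by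
    rw [hadef, hPrdef, hKkdef, LinearMap.finrank_range_add_finrank_ker, hdimE]
  have hak : a ≤ k := by omega
  -- F ≤ Kk
  have hpq0 : p * ((1 - p) * q) = 0 := by
    rw [← mul_assoc, mul_sub, mul_one, hpI, sub_self, zero_mul]
  have hFK : F ≤ Kk := by
    rintro x ⟨v, rfl⟩
    have h0 := congrArg (fun f => f v) (toEuclideanLin_mul p ((1 - p) * q))
    rw [hpq0] at h0
    simp only [map_zero, LinearMap.zero_apply] at h0
    exact LinearMap.mem_ker.mpr (by simpa [hLpdef] using h0.symm)
  -- finrank F ≤ b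
  have hFb : finrank ℂ F ≤ b := by
    have hFeq : F = Submodule.map (Matrix.toEuclideanLin (1 - p)) Qr := by
      rw [hFdef, toEuclideanLin_mul, LinearMap.range_comp, hQrdef, hLqdef]
    rw [hFeq]
    exact Submodule.finrank_map_le _ _
  set r := min b (k - a) with hrdef
  have hKka : finrank ℂ Kk = k - a := by omega
  have hFr : finrank ℂ F ≤ r := by
    have h1 : finrank ℂ F ≤ k - a := by rw [← hKka]; exact Submodule.finrank_mono hFK
    exact le_min hFb h1
  obtain ⟨W, hFW, hWK, hWr⟩ := exists_intermediate_finrank F Kk hFK r hFr (by omega)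
  -- the projection onto W
  set πW : E →ₗ[ℂ] E := ((W.subtypeL ∘L orthogonalProjection W : E →L[ℂ] E) : E →ₗ[ℂ] E) with hπdef
  have hπmem : ∀ x, πW x ∈ W := fun x => (orthogonalProjection W x).2
  have hπid : ∀ x ∈ W, πW x = x := by
    intro x hx
    have := orthogonalProjection_mem_subspace_eq_self (⟨x, hx⟩ : W)
    simpa [hπdef] using congrArg (Submodule.subtype W) this
  have hprojW : LinearMap.IsProj W πW := ⟨hπmem, hπid⟩
  set qt := Matrix.toEuclideanLin.symm πW with hqtdef
  have hqtL : Matrix.toEuclideanLin qt = πW := by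
    rw [hqtdef, LinearEquiv.apply_symm_apply]
  -- qt is a projection
  have hqtH : qt.IsHermitian := by
    rw [Matrix.isHermitian_iff_isSymmetric, hqtL, hπdef]
    exact Submodule.starProjection_isSymmetric W
  have hqtI : qt * qt = qt := by
    apply Matrix.toEuclideanLin.injective
    rw [toEuclideanLin_mul, hqtL]
    refine LinearMap.ext fun x => ?_
    exact hprojW.map_id _ (hprojW.map_mem x)
  -- qt * p = 0
  have hpqt : p * qt = 0 := by
    apply Matrix.toEuclideanLin.injective
    rw [toEuclideanLin_mul, hqtL, map_zero]
    refine LinearMap.ext fun x => ?_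
    exact LinearMap.mem_ker.mp (hWK (hπmem x))
  have hqtp : qt * p = 0 := by
    have : qt * p = (p * qt)ᴴ := by
      rw [Matrix.conjTranspose_mul, hqtH.eq, hpH.eq]
    rw [this, hpqt, Matrix.conjTranspose_zero]
  -- key identity qt * q = q - p * q
  have hkey : qt * ((1 - p) * q) = (1 - p) * q := by
    apply Matrix.toEuclideanLin.injective
    rw [toEuclideanLin_mul, hqtL]
    refine LinearMap.ext fun v => ?_
    exact hprojW.map_id _ (hFW (LinearMap.mem_range_self _ v))
  have hqtq : qt * q = q - p * q := by
    have h1 : (1 - p) * q + p * q = q := by rw [sub_mul, one_mul, sub_add_cancel]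
    calc qt * q = qt * ((1 - p) * q + p * q) := by rw [h1]
      _ = qt * ((1 - p) * q) + (qt * p) * q := by rw [mul_add, mul_assoc]
      _ = (1 - p) * q := by rw [hkey, hqtp, zero_mul, add_zero]
      _ = q - p * q := by rw [sub_mul, one_mul]
  -- traces
  have htrqt : qt.trace = (r : ℂ) := by
    rw [← trace_toEuclideanLin, hqtL, hprojW.trace, hWr]
  have htrqtq : (qt * q).trace = (b : ℂ) - (p * q).trace := by
    rw [hqtq, Matrix.trace_sub, htrq]
  -- delta nonneg
  have hδrew : (p * q).trace = ((q * p)ᴴ * (q * p)).trace := by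
    have : (q * p)ᴴ * (q * p) = p * q * (q * p) := by
      rw [Matrix.conjTranspose_mul, hqH.eq, hpH.eq]
    rw [this]
    have h2 : p * q * (q * p) = p * q * p := by
      rw [← mul_assoc, mul_assoc p q q, hqI]
    rw [h2, Matrix.trace_mul_comm (p * q) p, ← mul_assoc, hpI]
  have hδ0 : 0 ≤ (p * q).trace.re := by
    rw [hδrew]; exact trace_conjTranspose_mul_self_re_nonneg (q * p)
  -- norm computation
  have hexp : (q - qt)ᴴ * (q - qt) = q + qt - (q * qt + qt * q) := by
    rw [Matrix.conjTranspose_sub, hqH.eq, hqtH.eq, sub_mul, mul_sub, mul_sub, hqI, hqtI]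
    abel
  have htrexp : ((q - qt)ᴴ * (q - qt)).trace.re = (r : ℝ) - (b : ℝ) + 2 * (p * q).trace.re := by
    have hc : (q * qt).trace = (qt * q).trace := Matrix.trace_mul_comm q qt
    rw [hexp, Matrix.trace_sub, Matrix.trace_add, Matrix.trace_add, hc, htrqtq, htrq, htrqt]
    push_cast
    simp [Complex.sub_re, Complex.add_re]
    try ring
  have hrb : r ≤ b := min_le_left _ _
  -- conclusion pieces
  refine ⟨qt, ⟨hqtH, hqtI⟩, hqtp, ?_, ?_⟩
  · -- trace min formula
    have h1 : ntr qt = (r : ℝ) / k := by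
      rw [ntr, htrqt]; simp
    have h2 : ntr q = (b : ℝ) / k := by
      rw [ntr, htrq]; simp
    have h3 : ntr p = (a : ℝ) / k := by
      rw [ntr, htrp]; simp
    rw [h1, h2, h3, hrdef]
    have h4 : 1 - (a : ℝ) / k = ((k - a : ℕ) : ℝ) / k := by
      rw [Nat.cast_sub hak, sub_div, div_self (ne_of_gt hk0)]
    rw [h4, Nat.cast_min, min_div_div_right (le_of_lt hk0)]
  · -- norm bound
    set δ := ntr (p * q) with hδdef
    have hδ0' : 0 ≤ δ := by
      rw [hδdef, ntr]; positivity
    have hnorm : ntr ((q - qt)ᴴ * (q - qt)) ≤ 2 * δ := by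
      rw [ntr, htrexp, hδdef, ntr]
      rw [div_le_iff₀ hk0]
      have : 2 * ((p * q).trace.re / k) * k = 2 * (p * q).trace.re := by field_simp
      rw [this]
      have : (r:ℝ) ≤ (b:ℝ) := by exact_mod_cast hrb
      linarith
    rw [l2norm]
    calc Real.sqrt (ntr ((q - qt)ᴴ * (q - qt))) ≤ Real.sqrt (2 * δ) :=
          Real.sqrt_le_sqrt hnorm
      _ = Real.sqrt 2 * Real.sqrt δ := Real.sqrt_mul (by norm_num) δ
      _ ≤ 6 * Real.sqrt δ := by
          have h2 : Real.sqrt 2 ≤ 6 := by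
            rw [show (6:ℝ) = Real.sqrt 36 by
              rw [show (36:ℝ) = 6^2 by norm_num, Real.sqrt_sq (by norm_num)]]
            exact Real.sqrt_le_sqrt (by norm_num)
          exact mul_le_mul_of_nonneg_right h2 (Real.sqrt_nonneg δ)
end

section
/- Let m ≥ 1, let w : Fin m → ℝ satisfy w_i ≥ 0 for all i and Σ_i w_i = 1, and let h : Fin m → ℝ be injective (so that, viewed as the element (h_1, …, h_m) of the abelian C*-algebra ℂ^m, h is a self-adjoint generator of ℂ^m, and τ(f) := Σ_i w_i f_i defines a tracial state on ℂ^m). Then for every δ > 0 there exist a positive integer N, a real ε > 0, and a positive integer K such that for every k ≥ K the following holds: if a ∈ M_k(ℂ) is a self-adjoint matrix satisfying |tr_k(a^p) − Σ_{i} w_i h_i^p| < ε for every integer p with 1 ≤ p ≤ N, then there exists a unital *-algebra homomorphism π : ℂ^m → M_k(ℂ) such that ‖π(h) − a‖₂ < δ. -/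
open Matrix

/-- Conjugation of the diagonal embedding along `σ` by a unitary, as a unital
*-algebra homomorphism `ℂ^m → M_k(ℂ)`. -/
noncomputable def conjDiagHom {k m : ℕ} (U : Matrix.unitaryGroup (Fin k) ℂ)
    (σ : Fin k → Fin m) : (Fin m → ℂ) →⋆ₐ[ℂ] Matrix (Fin k) (Fin k) ℂ where
  toFun f := (U : Matrix (Fin k) (Fin k) ℂ) * diagonal (f ∘ σ) * star (U : Matrix (Fin k) (Fin k) ℂ)
  map_one' := by
    show (U : Matrix (Fin k) (Fin k) ℂ) * diagonal ((1 : Fin m → ℂ) ∘ σ) * star (U : Matrix (Fin k) (Fin k) ℂ) = 1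
    have h1 : ((1 : Fin m → ℂ) ∘ σ) = fun _ : Fin k => (1 : ℂ) := rfl
    rw [h1, diagonal_one, mul_one, U.2.2]
  map_mul' f g := by
    show (U : Matrix (Fin k) (Fin k) ℂ) * diagonal ((f * g) ∘ σ) * star (U : Matrix (Fin k) (Fin k) ℂ)
      = ((U : Matrix (Fin k) (Fin k) ℂ) * diagonal (f ∘ σ) * star (U : Matrix (Fin k) (Fin k) ℂ)) *
        ((U : Matrix (Fin k) (Fin k) ℂ) * diagonal (g ∘ σ) * star (U : Matrix (Fin k) (Fin k) ℂ))
    have h1 : ((f * g) ∘ σ) = fun j => (f ∘ σ) j * (g ∘ σ) j := rfl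
    have hU : star (U : Matrix (Fin k) (Fin k) ℂ) * (U : Matrix (Fin k) (Fin k) ℂ) = 1 := U.2.1
    rw [h1, ← diagonal_mul_diagonal]
    simp only [Matrix.mul_assoc]
    rw [← Matrix.mul_assoc (star (U : Matrix (Fin k) (Fin k) ℂ)), hU, Matrix.one_mul]
  map_zero' := by
    show (U : Matrix (Fin k) (Fin k) ℂ) * diagonal ((0 : Fin m → ℂ) ∘ σ) * star (U : Matrix (Fin k) (Fin k) ℂ) = 0
    have h1 : ((0 : Fin m → ℂ) ∘ σ) = fun _ : Fin k => (0 : ℂ) := rfl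
    rw [h1, diagonal_zero, Matrix.mul_zero, Matrix.zero_mul]
  map_add' f g := by
    show (U : Matrix (Fin k) (Fin k) ℂ) * diagonal ((f + g) ∘ σ) * star (U : Matrix (Fin k) (Fin k) ℂ)
      = (U : Matrix (Fin k) (Fin k) ℂ) * diagonal (f ∘ σ) * star (U : Matrix (Fin k) (Fin k) ℂ) +
        (U : Matrix (Fin k) (Fin k) ℂ) * diagonal (g ∘ σ) * star (U : Matrix (Fin k) (Fin k) ℂ)
    have h1 : ((f + g) ∘ σ) = fun j => (f ∘ σ) j + (g ∘ σ) j := rfl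
    rw [h1, ← diagonal_add, Matrix.mul_add, Matrix.add_mul]
  commutes' c := by
    show (U : Matrix (Fin k) (Fin k) ℂ) * diagonal (((algebraMap ℂ (Fin m → ℂ)) c) ∘ σ) * star (U : Matrix (Fin k) (Fin k) ℂ)
      = algebraMap ℂ (Matrix (Fin k) (Fin k) ℂ) c
    have h1 : (((algebraMap ℂ (Fin m → ℂ)) c) ∘ σ) = (fun _ : Fin k => c) := rfl
    rw [h1, algebraMap_eq_diagonal]
    have hd : (diagonal fun _ : Fin k => c) = c • (1 : Matrix (Fin k) (Fin k) ℂ) := by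
      ext i j
      by_cases hij : i = j <;> simp [Matrix.diagonal, hij, Matrix.one_apply]
    rw [hd, Matrix.mul_smul, mul_one, Matrix.smul_mul, U.2.2, ← hd]
    congr 1
  map_star' f := by
    show (U : Matrix (Fin k) (Fin k) ℂ) * diagonal ((star f) ∘ σ) * star (U : Matrix (Fin k) (Fin k) ℂ)
      = star ((U : Matrix (Fin k) (Fin k) ℂ) * diagonal (f ∘ σ) * star (U : Matrix (Fin k) (Fin k) ℂ))
    have h1 : ((star f) ∘ σ) = star (f ∘ σ) := rfl
    rw [h1, ← diagonal_conjTranspose]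
    simp only [star_eq_conjTranspose, conjTranspose_mul, conjTranspose_conjTranspose,
      Matrix.mul_assoc]

lemma conjDiagHom_apply {k m : ℕ} (U : Matrix.unitaryGroup (Fin k) ℂ)
    (σ : Fin k → Fin m) (f : Fin m → ℂ) :
    conjDiagHom U σ f = (U : Matrix (Fin k) (Fin k) ℂ) * diagonal (f ∘ σ) * star (U : Matrix (Fin k) (Fin k) ℂ) := rfl

lemma conj_pow_unitary {k : ℕ} (U : Matrix.unitaryGroup (Fin k) ℂ) (D : Matrix (Fin k) (Fin k) ℂ)
    (p : ℕ) : ((U : Matrix (Fin k) (Fin k) ℂ) * D * star (U : Matrix (Fin k) (Fin k) ℂ)) ^ p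
      = (U : Matrix (Fin k) (Fin k) ℂ) * D ^ p * star (U : Matrix (Fin k) (Fin k) ℂ) := by
  induction p with
  | zero => simp [pow_zero, mul_one, U.2.2]
  | succ n ih =>
      rw [pow_succ, ih, pow_succ]
      have hU : star (U : Matrix (Fin k) (Fin k) ℂ) * (U : Matrix (Fin k) (Fin k) ℂ) = 1 := U.2.1
      simp only [Matrix.mul_assoc]
      rw [← Matrix.mul_assoc (star (U : Matrix (Fin k) (Fin k) ℂ)) (U : Matrix (Fin k) (Fin k) ℂ),
        hU, Matrix.one_mul]

lemma trace_conj_unitary {k : ℕ} (U : Matrix.unitaryGroup (Fin k) ℂ)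
    (D : Matrix (Fin k) (Fin k) ℂ) :
    ((U : Matrix (Fin k) (Fin k) ℂ) * D * star (U : Matrix (Fin k) (Fin k) ℂ)).trace = D.trace := by
  rw [Matrix.trace_mul_cycle]
  have hU : star (U : Matrix (Fin k) (Fin k) ℂ) * (U : Matrix (Fin k) (Fin k) ℂ) = 1 := U.2.1
  rw [hU, Matrix.one_mul]

lemma ntr_pow_eigen {k : ℕ} (a : Matrix (Fin k) (Fin k) ℂ) (ha : a.IsHermitian) (p : ℕ) :
    ntr (a ^ p) = (∑ j, ha.eigenvalues j ^ p) / k := by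
  have hofReal : (RCLike.ofReal ∘ ha.eigenvalues : Fin k → ℂ)
      = fun j => (ha.eigenvalues j : ℂ) := rfl
  have hspec := ha.spectral_theorem
  rw [hofReal, Unitary.conjStarAlgAut_apply] at hspec
  unfold ntr
  conv_lhs => rw [hspec]
  rw [conj_pow_unitary, trace_conj_unitary, Matrix.diagonal_pow, Matrix.trace_diagonal]
  simp [Pi.pow_apply, ← Complex.ofReal_pow, Complex.re_sum]

lemma ntr_conj_diag {k : ℕ} (U : Matrix.unitaryGroup (Fin k) ℂ) (v : Fin k → ℂ) :
    ntr (((U : Matrix (Fin k) (Fin k) ℂ) * diagonal v * star (U : Matrix (Fin k) (Fin k) ℂ))ᴴ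
      * ((U : Matrix (Fin k) (Fin k) ℂ) * diagonal v * star (U : Matrix (Fin k) (Fin k) ℂ)))
      = (∑ j, Complex.normSq (v j)) / k := by
  have hU : star (U : Matrix (Fin k) (Fin k) ℂ) * (U : Matrix (Fin k) (Fin k) ℂ) = 1 := U.2.1
  have h1 : ((U : Matrix (Fin k) (Fin k) ℂ) * diagonal v * star (U : Matrix (Fin k) (Fin k) ℂ))ᴴ
      = (U : Matrix (Fin k) (Fin k) ℂ) * diagonal (star v) * star (U : Matrix (Fin k) (Fin k) ℂ) := by
    rw [← diagonal_conjTranspose]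
    simp only [star_eq_conjTranspose, conjTranspose_mul, conjTranspose_conjTranspose,
      Matrix.mul_assoc]
  rw [h1]
  have h2 : ((U : Matrix (Fin k) (Fin k) ℂ) * diagonal (star v) * star (U : Matrix (Fin k) (Fin k) ℂ))
      * ((U : Matrix (Fin k) (Fin k) ℂ) * diagonal v * star (U : Matrix (Fin k) (Fin k) ℂ))
      = (U : Matrix (Fin k) (Fin k) ℂ) * diagonal (fun j => star (v j) * v j)
        * star (U : Matrix (Fin k) (Fin k) ℂ) := by
    rw [← diagonal_mul_diagonal]
    simp only [Matrix.mul_assoc]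
    rw [← Matrix.mul_assoc (star (U : Matrix (Fin k) (Fin k) ℂ)) (U : Matrix (Fin k) (Fin k) ℂ),
      hU, Matrix.one_mul]
    rfl
  rw [h2]
  unfold ntr
  rw [trace_conj_unitary, Matrix.trace_diagonal]
  congr 1
  rw [Complex.re_sum]
  refine Finset.sum_congr rfl fun j _ => ?_
  have : star (v j) * v j = (Complex.normSq (v j) : ℂ) := by
    rw [RCLike.star_def, mul_comm, Complex.mul_conj]
  rw [this, Complex.ofReal_re]

/-- Lemma 3.3 of Dykema–Paulsen in concrete form: let `h` be a self-adjoint generator of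
`ℂ^m` (a real-valued function with pairwise distinct values) and let `τ(f) = Σ w_i f_i`
be a tracial state on `ℂ^m`.  For every `δ > 0` there are `N`, `ε > 0` and `K` such that
for all `k ≥ K`, every self-adjoint `(N,ε)`-microstate `a ∈ M_k(ℂ)` for `h` is within
`δ` in `‖·‖₂` of `π(h)` for some unital *-homomorphism `π : ℂ^m → M_k(ℂ)`. -/
theorem stmt_4 (m : ℕ) (hm : 1 ≤ m) (w : Fin m → ℝ) (hw : ∀ i, 0 ≤ w i)
    (hw1 : ∑ i, w i = 1) (h : Fin m → ℝ) (hinj : Function.Injective h) :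
    ∀ δ : ℝ, 0 < δ →
      ∃ (N : ℕ) (ε : ℝ) (K : ℕ), 0 < N ∧ 0 < ε ∧ 0 < K ∧
        ∀ k : ℕ, K ≤ k →
          ∀ a : Matrix (Fin k) (Fin k) ℂ, a.IsHermitian →
            (∀ p : ℕ, 1 ≤ p → p ≤ N →
              |ntr (a ^ p) - ∑ i, w i * h i ^ p| < ε) →
            ∃ π : (Fin m → ℂ) →⋆ₐ[ℂ] Matrix (Fin k) (Fin k) ℂ,
              l2norm (π (fun i => (h i : ℂ)) - a) < δ := by
  classical
  intro δ hδ
  -- minimal gap between the values of h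
  obtain ⟨G, hGpos, hG⟩ : ∃ G : ℝ, 0 < G ∧ ∀ i j : Fin m, i ≠ j → G ≤ |h i - h j| := by
    rcases (Finset.univ.offDiag (α := Fin m)).eq_empty_or_nonempty with he | hne2
    · refine ⟨1, one_pos, fun i j hij => ?_⟩
      exact absurd ((Finset.mem_offDiag (x := (i, j))).mpr
        ⟨Finset.mem_univ _, Finset.mem_univ _, hij⟩) (by simp [he])
    · refine ⟨Finset.inf' _ hne2 (fun p => |h p.1 - h p.2|), ?_, fun i j hij => ?_⟩
      · rw [Finset.lt_inf'_iff]
        rintro ⟨i, j⟩ hp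
        have hij : i ≠ j := (Finset.mem_offDiag.mp hp).2.2
        have : h i ≠ h j := fun hh => hij (hinj hh)
        simpa [abs_pos, sub_eq_zero] using this
      · exact Finset.inf'_le _ ((Finset.mem_offDiag (x := (i, j))).mpr
          ⟨Finset.mem_univ _, Finset.mem_univ _, hij⟩)
  set c : ℝ := ((G / 2) ^ 2) ^ (m - 1) with hc
  have hcpos : 0 < c := by positivity
  -- the polynomial q = ∏ (X - h i)^2
  set q : Polynomial ℝ := ∏ i : Fin m, (Polynomial.X - Polynomial.C (h i)) ^ 2 with hq
  have hqdeg : q.natDegree < 2 * m + 1 := by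
    have : q.natDegree ≤ 2 * m := by
      calc q.natDegree ≤ ∑ i : Fin m, ((Polynomial.X - Polynomial.C (h i)) ^ 2 : Polynomial ℝ).natDegree :=
            Polynomial.natDegree_prod_le _ _
        _ ≤ 2 * m := by
            apply le_of_eq
            rw [Finset.sum_congr rfl (fun i _ => by
              rw [Polynomial.natDegree_pow, Polynomial.natDegree_X_sub_C])]
            simp [mul_comm]
    omega
  have hqeval : ∀ t : ℝ, q.eval t = ∏ i, (t - h i) ^ 2 := by
    intro t; simp [hq, Polynomial.eval_prod]
  have hqzero : ∀ i : Fin m, q.eval (h i) = 0 := by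
    intro i
    rw [hq, Polynomial.eval_prod]
    apply Finset.prod_eq_zero (Finset.mem_univ i)
    simp
  -- the pointwise key estimate
  have key : ∀ (t : ℝ) (i0 : Fin m), (∀ i, |t - h i0| ≤ |t - h i|) →
      c * (t - h i0) ^ 2 ≤ q.eval t := by
    intro t i0 hmin
    rw [hqeval]
    have h1 : ∏ i, (t - h i) ^ 2 = (t - h i0) ^ 2 * ∏ i ∈ Finset.univ.erase i0, (t - h i) ^ 2 :=
      (Finset.mul_prod_erase Finset.univ _ (Finset.mem_univ i0)).symm
    have h2 : ∀ i ∈ Finset.univ.erase i0, (G / 2) ^ 2 ≤ (t - h i) ^ 2 := by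
      intro i hi
      have hi0 : i ≠ i0 := (Finset.mem_erase.mp hi).1
      have hGi : G ≤ |h i - h i0| := hG i i0 hi0
      have htri : |h i - h i0| ≤ |h i - t| + |t - h i0| := abs_sub_le _ _ _
      have habs : |h i - t| = |t - h i| := abs_sub_comm _ _
      have h2' : G ≤ 2 * |t - h i| := by
        calc G ≤ |h i - t| + |t - h i0| := le_trans hGi htri
          _ ≤ |t - h i| + |t - h i| := by rw [habs]; exact add_le_add le_rfl (hmin i)
          _ = 2 * |t - h i| := by ring
      have h3' : G / 2 ≤ |t - h i| := by linarith
      calc (G / 2) ^ 2 ≤ |t - h i| ^ 2 := pow_le_pow_left₀ (by positivity) h3' 2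
        _ = (t - h i) ^ 2 := sq_abs _
    have h3 : c ≤ ∏ i ∈ Finset.univ.erase i0, (t - h i) ^ 2 := by
      have hcard : (Finset.univ.erase i0).card = m - 1 := by
        rw [Finset.card_erase_of_mem (Finset.mem_univ _), Finset.card_univ, Fintype.card_fin]
      calc c = ∏ _i ∈ Finset.univ.erase i0, (G / 2) ^ 2 := by
            rw [Finset.prod_const, hcard]
        _ ≤ ∏ i ∈ Finset.univ.erase i0, (t - h i) ^ 2 :=
            Finset.prod_le_prod (fun _ _ => by positivity) h2
    calc c * (t - h i0) ^ 2
        ≤ (∏ i ∈ Finset.univ.erase i0, (t - h i) ^ 2) * (t - h i0) ^ 2 :=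
          mul_le_mul_of_nonneg_right h3 (sq_nonneg _)
      _ = ∏ i, (t - h i) ^ 2 := by rw [h1, mul_comm]
  set S : ℝ := ∑ p ∈ Finset.range (2 * m + 1), |q.coeff p| with hS
  have hSnn : 0 ≤ S := Finset.sum_nonneg fun _ _ => abs_nonneg _
  refine ⟨2 * m, c * δ ^ 2 / (S + 1), 1, by omega, by positivity, one_pos, ?_⟩
  intro k hk a ha hmom
  have hkpos : (0 : ℝ) < k := by exact_mod_cast hk
  set μ := ha.eigenvalues with hμ
  set U := ha.eigenvectorUnitary with hUdef
  -- choose σ j as the index of the value of h nearest to μ j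
  have hσex : ∀ j : Fin k, ∃ i : Fin m, ∀ i' : Fin m, |μ j - h i| ≤ |μ j - h i'| := by
    intro j
    obtain ⟨i, _, hi⟩ := Finset.exists_min_image Finset.univ (fun i => |μ j - h i|)
      ⟨⟨0, hm⟩, Finset.mem_univ _⟩
    exact ⟨i, fun i' => hi i' (Finset.mem_univ _)⟩
  choose σ hσ using hσex
  refine ⟨conjDiagHom U σ, ?_⟩
  -- moment quantities
  set T : ℕ → ℝ := fun p => (∑ j, μ j ^ p) / k with hT
  set H : ℕ → ℝ := fun p => ∑ i, w i * h i ^ p with hH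
  have hTp : ∀ p : ℕ, 1 ≤ p → p ≤ 2 * m → |T p - H p| < c * δ ^ 2 / (S + 1) := by
    intro p hp1 hp2
    have := hmom p hp1 hp2
    rwa [ntr_pow_eigen a ha p] at this
  have hT0 : T 0 - H 0 = 0 := by
    simp only [hT, hH, pow_zero, mul_one]
    rw [hw1]
    simp [Finset.card_univ]
    field_simp
    norm_num
  -- the average of q over the eigenvalues
  have hsum1 : (∑ j, q.eval (μ j)) / k
      = ∑ p ∈ Finset.range (2 * m + 1), q.coeff p * T p := by
    have : ∀ j, q.eval (μ j) = ∑ p ∈ Finset.range (2 * m + 1), q.coeff p * μ j ^ p :=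
      fun j => Polynomial.eval_eq_sum_range' hqdeg _
    rw [Finset.sum_congr rfl fun j _ => this j, Finset.sum_comm]
    rw [Finset.sum_div]
    refine Finset.sum_congr rfl fun p _ => ?_
    rw [← Finset.mul_sum, mul_div_assoc]
  have hsum2 : (0 : ℝ) = ∑ p ∈ Finset.range (2 * m + 1), q.coeff p * H p := by
    have h0 : (0 : ℝ) = ∑ i, w i * q.eval (h i) := by
      rw [Finset.sum_congr rfl fun i _ => by rw [hqzero i, mul_zero]]
      simp
    rw [h0]
    have : ∀ i, w i * q.eval (h i)
        = ∑ p ∈ Finset.range (2 * m + 1), q.coeff p * (w i * h i ^ p) := by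
      intro i
      rw [Polynomial.eval_eq_sum_range' hqdeg, Finset.mul_sum]
      refine Finset.sum_congr rfl fun p _ => by ring
    rw [Finset.sum_congr rfl fun i _ => this i, Finset.sum_comm]
    refine Finset.sum_congr rfl fun p _ => ?_
    rw [← Finset.mul_sum]
  have hA : (∑ j, q.eval (μ j)) / k
      = ∑ p ∈ Finset.range (2 * m + 1), q.coeff p * (T p - H p) := by
    rw [hsum1]
    have : (∑ p ∈ Finset.range (2 * m + 1), q.coeff p * T p)
        = (∑ p ∈ Finset.range (2 * m + 1), q.coeff p * T p)
          - ∑ p ∈ Finset.range (2 * m + 1), q.coeff p * H p := by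
      rw [← hsum2, sub_zero]
    rw [this, ← Finset.sum_sub_distrib]
    refine Finset.sum_congr rfl fun p _ => by ring
  have hAle : (∑ j, q.eval (μ j)) / k ≤ S * (c * δ ^ 2 / (S + 1)) := by
    rw [hA, hS, Finset.sum_mul]
    refine le_trans (le_abs_self _) (le_trans (Finset.abs_sum_le_sum_abs _ _) ?_)
    refine Finset.sum_le_sum fun p hp => ?_
    rw [abs_mul]
    rcases Nat.eq_zero_or_pos p with hp0 | hp1
    · subst hp0
      rw [hT0, abs_zero, mul_zero]
      positivity
    · have hp2 : p ≤ 2 * m := by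
        have := Finset.mem_range.mp hp; omega
      exact mul_le_mul_of_nonneg_left (le_of_lt (hTp p hp1 hp2)) (abs_nonneg _)
  have hAlt : (∑ j, q.eval (μ j)) / k < c * δ ^ 2 := by
    refine lt_of_le_of_lt hAle ?_
    rw [mul_div_assoc']
    rw [div_lt_iff₀ (by linarith)]
    have hcd : 0 < c * δ ^ 2 := by positivity
    nlinarith
  -- bound the squared distance sum
  have hdist : c * ((∑ j, (h (σ j) - μ j) ^ 2) / k) < c * δ ^ 2 := by
    refine lt_of_le_of_lt ?_ hAlt
    rw [mul_div_assoc']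
    gcongr
    rw [Finset.mul_sum]
    refine Finset.sum_le_sum fun j _ => ?_
    have h1 : (h (σ j) - μ j) ^ 2 = (μ j - h (σ j)) ^ 2 := by ring
    rw [h1]
    exact key (μ j) (σ j) (hσ j)
  have hfinal : (∑ j, (h (σ j) - μ j) ^ 2) / k < δ ^ 2 :=
    (mul_lt_mul_iff_right₀ hcpos).mp hdist
  -- identify the difference as a conjugated diagonal matrix
  have hspec := ha.spectral_theorem
  rw [← hUdef, ← hμ] at hspec
  have hx : conjDiagHom U σ (fun i => (h i : ℂ)) - a
      = (U : Matrix (Fin k) (Fin k) ℂ)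
        * diagonal (fun j => ((h (σ j) : ℂ) - (μ j : ℂ)))
        * star (U : Matrix (Fin k) (Fin k) ℂ) := by
    rw [conjDiagHom_apply]
    conv_lhs => rw [hspec, Unitary.conjStarAlgAut_apply]
    rw [← Matrix.sub_mul, ← Matrix.mul_sub]
    congr 2
    rw [diagonal_sub]
    rfl
  unfold l2norm
  rw [hx, ntr_conj_diag]
  rw [Real.sqrt_lt' hδ]
  have heq : ∀ j : Fin k, Complex.normSq ((h (σ j) : ℂ) - (μ j : ℂ))
      = (h (σ j) - μ j) ^ 2 := by
    intro j
    have hv : ((h (σ j) : ℂ) - (μ j : ℂ)) = ((h (σ j) - μ j : ℝ) : ℂ) := by push_cast; ring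
    rw [hv, Complex.normSq_ofReal]
    ring
  rw [Finset.sum_congr rfl fun j _ => heq j]
  exact hfinal
end

section
/- Let n, m ≥ 1, let H be a complex Hilbert space, let ψ ∈ H be a unit vector, and for x ∈ Fin n, a ∈ Fin m let E_{x,a} and F_{x,a} be projections (self-adjoint idempotent bounded operators) on H satisfying Σ_a E_{x,a} = 1 and Σ_a F_{x,a} = 1 for each x, and E_{x,a} F_{y,b} = F_{y,b} E_{x,a} for all x, y, a, b. Assume the resulting correlation is synchronous: ⟨E_{x,a} F_{x,b} ψ, ψ⟩ = 0 whenever a ≠ b. Then: (1) E_{x,a} ψ = F_{x,a} ψ for all x, a; (2) the vector state φ(T) := ⟨T ψ, ψ⟩ is tracial on the unital subalgebra B of bounded operators on H generated by {E_{x,a} : x ∈ Fin n, a ∈ Fin m}, i.e. φ(ST) = φ(TS) for all S, T ∈ B; and (3) ⟨E_{x,a} F_{y,b} ψ, ψ⟩ = φ(E_{x,a} E_{y,b}) for all x, y, a, b. -/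
/-- The other direction of Theorem 2.1 of Dykema–Paulsen (Theorem 5.4 of [PSSTW]): for a
synchronous commuting quantum strategy `(E, F, ψ)`: (1) `E_{x,a} ψ = F_{x,a} ψ`; (2) the
vector state `φ(T) = ⟨Tψ, ψ⟩` is tracial on the unital algebra generated by the
`E_{x,a}`; (3) the correlation is given by `⟨E_{x,a} F_{y,b} ψ, ψ⟩ = φ(E_{x,a} E_{y,b})`. -/
theorem stmt_7 (n m : ℕ) (hn : 1 ≤ n) (hm : 1 ≤ m)
    (H : Type) [NormedAddCommGroup H] [InnerProductSpace ℂ H] [CompleteSpace H]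
    (ψ : H) (hψ : ‖ψ‖ = 1)
    (E F : Fin n → Fin m → (H →L[ℂ] H))
    (hE : ∀ x a, IsSelfAdjoint (E x a) ∧ E x a * E x a = E x a)
    (hF : ∀ y b, IsSelfAdjoint (F y b) ∧ F y b * F y b = F y b)
    (hEsum : ∀ x, ∑ a, E x a = 1)
    (hFsum : ∀ y, ∑ b, F y b = 1)
    (hcomm : ∀ x y a b, E x a * F y b = F y b * E x a)
    (hsync : ∀ x a b, a ≠ b → (inner ℂ ((E x a * F x b) ψ) ψ : ℂ) = 0) :
    (∀ x a, E x a ψ = F x a ψ) ∧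
    (∀ S T : H →L[ℂ] H,
        S ∈ Algebra.adjoin ℂ (Set.range fun p : Fin n × Fin m => E p.1 p.2) →
        T ∈ Algebra.adjoin ℂ (Set.range fun p : Fin n × Fin m => E p.1 p.2) →
        (inner ℂ ((S * T) ψ) ψ : ℂ) = (inner ℂ ((T * S) ψ) ψ : ℂ)) ∧
    (∀ x y a b,
        (inner ℂ ((E x a * F y b) ψ) ψ : ℂ) = (inner ℂ ((E x a * E y b) ψ) ψ : ℂ)) := by
  have hEsym : ∀ x a (u v : H), (inner ℂ ((E x a) u) v : ℂ) = inner ℂ u ((E x a) v) :=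
    fun x a u v => (hE x a).1.isSymmetric u v
  have hFsym : ∀ y b (u v : H), (inner ℂ ((F y b) u) v : ℂ) = inner ℂ u ((F y b) v) :=
    fun y b u v => (hF y b).1.isSymmetric u v
  have step1 : ∀ x a, E x a ψ = F x a ψ := by
    intro x a
    have hEF : (inner ℂ ((E x a) ((F x a) ψ)) ψ : ℂ) = inner ℂ ((E x a) ψ) ψ := by
      have h1 : ∑ b, (inner ℂ ((E x a * F x b) ψ) ψ : ℂ) = inner ℂ ((E x a) ψ) ψ := by
        have hs : ∑ b, (E x a * F x b) = E x a := by
          rw [← Finset.mul_sum, hFsum, mul_one]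
        calc ∑ b, (inner ℂ ((E x a * F x b) ψ) ψ : ℂ)
            = inner ℂ ((∑ b, (E x a * F x b)) ψ) ψ := by
              rw [← sum_inner]; congr 1; simp
          _ = inner ℂ ((E x a) ψ) ψ := by rw [hs]
      rw [Finset.sum_eq_single a (fun b _ hb => hsync x a b (Ne.symm hb)) (by simp)] at h1
      simpa using h1
    have hFE : (inner ℂ ((E x a) ((F x a) ψ)) ψ : ℂ) = inner ℂ ((F x a) ψ) ψ := by
      have h1 : ∑ a', (inner ℂ ((E x a' * F x a) ψ) ψ : ℂ) = inner ℂ ((F x a) ψ) ψ := by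
        have hs : ∑ a', (E x a' * F x a) = F x a := by
          rw [← Finset.sum_mul, hEsum, one_mul]
        calc ∑ a', (inner ℂ ((E x a' * F x a) ψ) ψ : ℂ)
            = inner ℂ ((∑ a', (E x a' * F x a)) ψ) ψ := by
              rw [← sum_inner]; congr 1; simp
          _ = inner ℂ ((F x a) ψ) ψ := by rw [hs]
      rw [Finset.sum_eq_single a (fun a' _ ha' => hsync x a' a ha') (by simp)] at h1
      simpa using h1
    have hEF' : (inner ℂ ψ ((E x a) ((F x a) ψ)) : ℂ) = inner ℂ ψ ((E x a) ψ) := by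
      have := congrArg (starRingEnd ℂ) hEF
      simpa only [inner_conj_symm] using this
    have hFE' : (inner ℂ ψ ((E x a) ((F x a) ψ)) : ℂ) = inner ℂ ψ ((F x a) ψ) := by
      have := congrArg (starRingEnd ℂ) hFE
      simpa only [inner_conj_symm] using this
    have hFEop : (F x a) ((E x a) ψ) = (E x a) ((F x a) ψ) := by
      rw [← ContinuousLinearMap.mul_apply, ← ContinuousLinearMap.mul_apply, hcomm]
    have e1 : (inner ℂ ((E x a) ψ) ((E x a) ψ) : ℂ) = inner ℂ ψ ((E x a) ψ) := by
      rw [hEsym]; congr 1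
      rw [← ContinuousLinearMap.mul_apply, (hE x a).2]
    have e4 : (inner ℂ ((F x a) ψ) ((F x a) ψ) : ℂ) = inner ℂ ψ ((F x a) ψ) := by
      rw [hFsym]; congr 1
      rw [← ContinuousLinearMap.mul_apply, (hF x a).2]
    have e2 : (inner ℂ ((E x a) ψ) ((F x a) ψ) : ℂ) = inner ℂ ψ ((E x a) ψ) := by
      rw [hEsym]; exact hEF'
    have e3 : (inner ℂ ((F x a) ψ) ((E x a) ψ) : ℂ) = inner ℂ ψ ((F x a) ψ) := by
      rw [hFsym, hFEop]; exact hFE'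
    have hzero : (inner ℂ (E x a ψ - F x a ψ) (E x a ψ - F x a ψ) : ℂ) = 0 := by
      rw [inner_sub_sub_self, e1, e2, e3, e4]; ring
    have := inner_self_eq_zero.mp hzero
    exact sub_eq_zero.mp this
  set B := Algebra.adjoin ℂ (Set.range fun p : Fin n × Fin m => E p.1 p.2) with hB
  -- F commutes with everything in B
  have commF : ∀ (y : Fin n) (b : Fin m) (T : H →L[ℂ] H), T ∈ B →
      F y b * T = T * F y b := by
    intro y b T hT
    induction hT using Algebra.adjoin_induction with
    | mem g hg =>
      obtain ⟨p, rfl⟩ := hg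
      exact (hcomm p.1 y p.2 b).symm
    | algebraMap r => exact (Algebra.commutes r (F y b)).symm
    | add s t _ _ hs ht => rw [mul_add, add_mul, hs, ht]
    | mul s t _ _ hs ht => rw [← mul_assoc, hs, mul_assoc, ht, mul_assoc]
  -- trace-swap with a generator
  have lemA : ∀ (x : Fin n) (a : Fin m) (T : H →L[ℂ] H), T ∈ B →
      (inner ℂ ((T * E x a) ψ) ψ : ℂ) = inner ℂ ((E x a * T) ψ) ψ := by
    intro x a T hT
    have h1 : (T * E x a) ψ = (F x a * T) ψ := by
      rw [commF x a T hT]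
      simp only [ContinuousLinearMap.mul_apply]
      rw [step1 x a]
    rw [h1]
    calc (inner ℂ ((F x a * T) ψ) ψ : ℂ)
        = inner ℂ (T ψ) ((F x a) ψ) := by
          rw [ContinuousLinearMap.mul_apply, hFsym]
      _ = inner ℂ (T ψ) ((E x a) ψ) := by rw [← step1 x a]
      _ = inner ℂ ((E x a) (T ψ)) ψ := (hEsym x a (T ψ) ψ).symm
      _ = inner ℂ ((E x a * T) ψ) ψ := rfl
  refine ⟨step1, ?_, ?_⟩
  · intro S T hS hT
    induction hS using Algebra.adjoin_induction generalizing T with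
    | mem g hg =>
      obtain ⟨p, rfl⟩ := hg
      exact (lemA p.1 p.2 T hT).symm
    | algebraMap r =>
      congr 1
      rw [Algebra.commutes]
    | add s t hs' ht' ihs iht =>
      have : ∀ (U V : H →L[ℂ] H), ((U + V) * T) ψ = (U * T) ψ + (V * T) ψ := by
        intro U V; simp [add_mul]
      rw [add_mul, mul_add]
      simp only [ContinuousLinearMap.add_apply, inner_add_left]
      rw [ihs T hT, iht T hT]
    | mul s t hs' ht' ihs iht =>
      calc (inner ℂ ((s * t * T) ψ) ψ : ℂ)
          = inner ℂ ((s * (t * T)) ψ) ψ := by rw [mul_assoc]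
        _ = inner ℂ (((t * T) * s) ψ) ψ := ihs (t * T) (mul_mem ht' hT)
        _ = inner ℂ ((t * (T * s)) ψ) ψ := by rw [mul_assoc]
        _ = inner ℂ (((T * s) * t) ψ) ψ := iht (T * s) (mul_mem hT hs')
        _ = inner ℂ ((T * (s * t)) ψ) ψ := by rw [mul_assoc]
  · intro x y a b
    have h : (E x a * F y b) ψ = (E x a * E y b) ψ := by
      simp only [ContinuousLinearMap.mul_apply]
      rw [step1 y b]
    rw [h]
end
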